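/- Let F be a complete discretely valued field, let g(T) ∈ O_F[T] be a separable monic Eisenstein polynomial with roots α_1, …, α_n in F^sep, let α be one of the roots, E = F(α), and d = v_E(g'(α)). Then for any π ∈ F^sep, v_E(g(π)) ≤ w + d, where w = max_{1 ≤ i ≤ n} v_E(π − α_i). -/

import Mathlib

open scoped LaurentSeries Multiplicative
noncomputable section

namespace FieldOfNormsPaper

abbrev Zm0 := WithZero (Multiplicative ℤ)
abbrev Qm0 := WithZero (Multiplicative ℚ)

def zToQ : Zm0 →*₀ Qm0 :=
  WithZero.map' (AddMonoidHom.toMultiplicative (Int.castAddHom ℚ))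

structure CDVF (F : Type) [Field F] where
  val : Valuation F Zm0
  isDiscrete : Function.Surjective val
  complete : @CompleteSpace F (Valued.mk' val).toUniformSpace

structure LocalFieldStr (k : Type) [Field k] (F : Type) [Field F] extends CDVF F where
  residIso : IsLocalRing.ResidueField val.valuationSubring ≃+* k

def LocalFieldStr.res {k F : Type} [Field k] [Field F] (S : LocalFieldStr k F)
    (x : F) (hx : S.val x ≤ 1) : k :=
  S.residIso (IsLocalRing.residue _ ⟨x, hx⟩)

def IsTotRam {F : Type} [Field F] (S : CDVF F) (L : Type) [Field L] [Algebra F L] : Prop :=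
  ∃ (g : Polynomial S.val.valuationSubring) (α : L),
    g.Monic ∧ g.IsEisensteinAt (IsLocalRing.maximalIdeal S.val.valuationSubring) ∧
    g.natDegree = Module.finrank F L ∧
    Polynomial.aeval α (g.map (algebraMap S.val.valuationSubring F)) = 0 ∧
    Algebra.adjoin F {α} = ⊤

structure AObj (p : ℕ) (k : Type) [Field k] where
  F : Type
  E : Type
  [fieldF : Field F]
  [fieldE : Field E]
  [alg : Algebra F E]
  base : LocalFieldStr k F
  valE : Valuation E Qm0
  val_comp : ∀ x : F, valE (algebraMap F E x) = zToQ (base.val x)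
  galois : IsGalois F E
  abelian : ∀ σ τ : E ≃ₐ[F] E, σ * τ = τ * σ
  totRam : ∀ L : IntermediateField F E, FiniteDimensional F L → IsTotRam base.toCDVF L
  infiniteIfCharZero : CharZero F → ¬ FiniteDimensional F E

attribute [instance] AObj.fieldF AObj.fieldE AObj.alg

abbrev K (k : Type) [Field k] := LaurentSeries k

variable (k : Type) [Field k]

def Tvar : K k := HahnSeries.single 1 1

def AutK : Subgroup ((K k) ≃ₐ[k] (K k)) where
  carrier := {σ | ∀ f : K k, Valued.v (σ f) = Valued.v f}
  one_mem' := fun _ => rfl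
  mul_mem' := by
    intro a b ha hb f
    have : (a * b) f = a (b f) := rfl
    rw [this, ha, hb]
  inv_mem' := by
    intro a ha f
    have : a (a⁻¹ f) = f := by
      have : a⁻¹ f = a.symm f := rfl
      rw [this]; exact a.apply_symm_apply f
    conv_rhs => rw [← this]
    rw [ha]

instance autKTop : TopologicalSpace (AutK k) :=
  TopologicalSpace.induced (fun σ => ((σ : (K k) ≃ₐ[k] (K k)) : K k → K k)) inferInstance

structure BObj where
  A : Subgroup (AutK k)
  abelian : ∀ σ τ : A, σ * τ = τ * σ
  closed : IsClosed (A : Set (AutK k))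

/-- `Sset` is a set of representatives for the cosets of `H'` in `H`. -/
def IsTransversal {G : Type} [Group G] (H H' : Subgroup G) (Sset : Finset G) : Prop :=
  (∀ s ∈ Sset, s ∈ H) ∧ ∀ τ ∈ H, ∃! s, s ∈ Sset ∧ s⁻¹ * τ ∈ H'

/-- `π` is a uniformizer of the subextension `L` with respect to the valuation `w`:
it has the largest value `< 1` among elements of `L`. -/
def IsUnifOf {F E : Type} [Field F] [Field E] [Algebra F E] (w : Valuation E Qm0)
    (L : IntermediateField F E) (π : E) : Prop :=
  π ∈ L ∧ w π ≠ 0 ∧ w π < 1 ∧ ∀ y ∈ L, w y < 1 → w y ≠ 0 → w y ≤ w π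

/-- An identification of the field of norms `X_F(E)` of a totally ramified abelian
extension `E/F` with `k((T))`.  An element `x` of `k((T))` corresponds to the
norm-compatible sequence `(comp x L)_L`, indexed by the finite subextensions `L` of
`E/F`; multiplication is componentwise, addition of integral elements is given by
the limit of the norms of the sums of the components, the distinguished uniformizer
`T` corresponds to a norm-compatible sequence of uniformizers, the Galois group acts
through `act`, and the residue field `k` is embedded via compatible `p`-power roots
of Teichmüller lifts. -/
structure NormField (k : Type) [Field k] (F E : Type) [Field F] [Field E] [Algebra F E]
    (S : LocalFieldStr k F) (w : Valuation E Qm0) where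
  /-- the component in `L` of an element of `k((T)) ≅ X_F(E)` -/
  comp : K k → IntermediateField F E → E
  comp_mem : ∀ x L, comp x L ∈ L
  comp_one : ∀ L, comp 1 L = 1
  comp_zero : ∀ L, comp 0 L = 0
  /-- multiplication is componentwise -/
  comp_mul : ∀ x y L, comp (x * y) L = comp x L * comp y L
  /-- the components form norm-compatible sequences:  the norm from `L'` to `L`
  (the product over a transversal of `Gal(E/L')` in `Gal(E/L)`) of the `L'`-component
  is the `L`-component -/
  comp_norm : ∀ (x : K k) (L L' : IntermediateField F E), L ≤ L' →
      FiniteDimensional F L' → ∀ Sset : Finset (E ≃ₐ[F] E),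
      IsTransversal L.fixingSubgroup L'.fixingSubgroup Sset →
      (∏ s ∈ Sset, s (comp x L')) = comp x L
  /-- an element of `X_F(E)` is determined by its components -/
  comp_inj : ∀ x y : K k, (∀ L : IntermediateField F E, FiniteDimensional F L → comp x L = comp y L) → x = y
  /-- every integral norm-compatible sequence arises from an element -/
  comp_surj : ∀ c : IntermediateField F E → E,
      (∀ L : IntermediateField F E, FiniteDimensional F L → c L ∈ L ∧ w (c L) ≤ 1) →
      (∀ (L L' : IntermediateField F E), L ≤ L' → FiniteDimensional F L' →
        ∀ Sset : Finset (E ≃ₐ[F] E),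
        IsTransversal L.fixingSubgroup L'.fixingSubgroup Sset →
        (∏ s ∈ Sset, s (c L')) = c L) →
      ∃ x : K k, Valued.v x ≤ (1 : Zm0) ∧ ∀ L : IntermediateField F E, FiniteDimensional F L → comp x L = c L
  /-- addition: the `L`-component of `x + y` is the limit over `L'` of the norms of
  the sums of the `L'`-components of `x` and `y` -/
  comp_add : ∀ x y : K k, Valued.v x ≤ (1 : Zm0) → Valued.v y ≤ (1 : Zm0) →
      ∀ L : IntermediateField F E, FiniteDimensional F L → ∀ N : ℕ,
      ∃ L₀ : IntermediateField F E, FiniteDimensional F L₀ ∧ L ≤ L₀ ∧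
        ∀ L' : IntermediateField F E, FiniteDimensional F L' → L₀ ≤ L' →
        ∀ Sset : Finset (E ≃ₐ[F] E),
        IsTransversal L.fixingSubgroup L'.fixingSubgroup Sset →
        w (comp (x + y) L - ∏ s ∈ Sset, s (comp x L' + comp y L'))
          ≤ (w (comp (Tvar k) L)) ^ N
  /-- the distinguished uniformizer `T` of `k((T))` corresponds to a compatible
  sequence of uniformizers of the finite subextensions -/
  unif : ∀ L : IntermediateField F E, FiniteDimensional F L → IsUnifOf w L (comp (Tvar k) L)
  /-- the action of `Gal(E/F)` on `X_F(E) ≅ k((T))` -/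
  act : (E ≃ₐ[F] E) →* AutK k
  /-- the action is induced by the action on the components -/
  act_compat : ∀ (σ : E ≃ₐ[F] E) (x : K k) (L : IntermediateField F E), FiniteDimensional F L →
      comp (((act σ : AutK k) : (K k) ≃ₐ[k] (K k)) x) L = σ (comp x L)
  act_inj : Function.Injective act
  act_range_closed : IsClosed ((act.range : Subgroup (AutK k)) : Set (AutK k))
  /-- the embedding of `k` in `X_F(E)` is by compatible `p`-power roots of
  Teichmüller lifts: the `L`-component of (the element corresponding to) `ζ ∈ k`,
  raised to the power `p^a` with `a = v_p([L:F])`, reduces to `ζ` in the residue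
  field -/
  teich : ∀ ζ : k, ∀ L : IntermediateField F E, FiniteDimensional F L → ∀ c : F, ∀ hc : S.val c ≤ 1,
      S.res c hc = ζ →
      w ((comp (algebraMap k (K k) ζ) L) ^
          ((ringChar k) ^ ((Module.finrank F L).factorization (ringChar k))) -
        algebraMap F E c) < 1

/-- The field-of-norms data attached to an object of `𝒜`. -/
abbrev ANorm {p : ℕ} {k : Type} [Field k] (a : AObj p k) : Type :=
  NormField k a.F a.E a.base a.valE

/-- The object `ℱ(E/F) = (X_F(E), Gal(E/F))` of `ℬ` attached to an object of `𝒜`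
with field-of-norms data. -/
def toBObj {p : ℕ} {k : Type} [Field k] (a : AObj p k) (n : ANorm a) : BObj k where
  A := n.act.range
  abelian := by
    rintro ⟨x, hx⟩ ⟨y, hy⟩
    obtain ⟨s, rfl⟩ := hx
    obtain ⟨t, rfl⟩ := hy
    refine Subtype.ext ?_
    show n.act s * n.act t = n.act t * n.act s
    rw [← map_mul, ← map_mul, a.abelian]
  closed := n.act_range_closed



/-- The lower ramification subgroup `Γ[x]` of `Γ = Aut_k(K)` for `x : ℝ`:
the set of `σ ∈ Aut_k(K)` with `v_K(σ(T) - T) ≥ x + 1`. -/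
def ramGroup (x : ℝ) : Subgroup (AutK k) where
  carrier := {σ | Valued.v (((σ : (K k) ≃ₐ[k] (K k)) (Tvar k)) - Tvar k)
      ≤ ((Multiplicative.ofAdd (-(⌈x⌉ + 1)) : Multiplicative ℤ) : Zm0)}
  one_mem' := by
    simp only [Set.mem_setOf_eq, OneMemClass.coe_one, AlgEquiv.one_apply, sub_self, map_zero]
    exact zero_le'
  mul_mem' := by
    intro a b ha hb
    simp only [Set.mem_setOf_eq] at *
    have hab : ((a * b : AutK k) : (K k) ≃ₐ[k] (K k)) (Tvar k)
        = (a : (K k) ≃ₐ[k] (K k)) ((b : (K k) ≃ₐ[k] (K k)) (Tvar k)) := rfl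
    rw [hab]
    have key : (a : (K k) ≃ₐ[k] (K k)) ((b : (K k) ≃ₐ[k] (K k)) (Tvar k)) - Tvar k
        = (a : (K k) ≃ₐ[k] (K k)) ((b : (K k) ≃ₐ[k] (K k)) (Tvar k) - Tvar k)
          + ((a : (K k) ≃ₐ[k] (K k)) (Tvar k) - Tvar k) := by
      rw [map_sub]; ring
    rw [key]
    refine le_trans (Valued.v.map_add _ _) (max_le ?_ ha)
    rw [a.2]; exact hb
  inv_mem' := by
    intro a ha
    simp only [Set.mem_setOf_eq] at *
    have h1 : (a : (K k) ≃ₐ[k] (K k)) ((a⁻¹ : AutK k).1 (Tvar k) - Tvar k)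
        = Tvar k - (a : (K k) ≃ₐ[k] (K k)) (Tvar k) := by
      rw [map_sub]
      congr 1
      exact (a : (K k) ≃ₐ[k] (K k)).apply_symm_apply (Tvar k)
    calc Valued.v ((a⁻¹ : AutK k).1 (Tvar k) - Tvar k)
        = Valued.v ((a : (K k) ≃ₐ[k] (K k)) ((a⁻¹ : AutK k).1 (Tvar k) - Tvar k)) := (a.2 _).symm
      _ = Valued.v (Tvar k - (a : (K k) ≃ₐ[k] (K k)) (Tvar k)) := by rw [h1]
      _ = Valued.v ((a : (K k) ≃ₐ[k] (K k)) (Tvar k) - Tvar k) := Valuation.map_sub_swap _ _ _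
      _ ≤ _ := ha

variable {k}

/-- A morphism of `ℬ` from `(K, A)` to `(K, A')` (where `K = k((T))`): a continuous
`k`-embedding `σ : K → K` such that `K` is finite separable over `σ(K)`, `A'`
stabilizes `σ(K)`, and the image of `A'` in `Aut_k(K)` is an open subgroup of `A`. -/
structure BMor (b b' : BObj k) where
  /-- the underlying continuous `k`-embedding -/
  σ : (K k) →ₐ[k] (K k)
  cont : Continuous σ
  /-- `K` is finite over `σ(K)` -/
  fin : (σ : (K k) →+* (K k)).Finite
  /-- `K` is separable over `σ(K)` -/
  sep : @Algebra.IsSeparable (K k) (K k) _ _ (σ : (K k) →+* (K k)).toAlgebra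
  /-- `A'` stabilizes `σ(K)` -/
  stab : ∀ γ : b'.A, ∀ x : K k, ∃ y : K k, ((γ : AutK k) : (K k) ≃ₐ[k] (K k)) (σ x) = σ y
  /-- the image of `A'` in `Aut_k(K)` is contained in `A` ... -/
  image_le : {τ : AutK k | ∃ γ ∈ b'.A, ∀ x : K k,
      ((γ : (K k) ≃ₐ[k] (K k)) (σ x)) = σ ((τ : (K k) ≃ₐ[k] (K k)) x)} ⊆ (b.A : Set (AutK k))
  /-- ... and is an open subgroup of `A` -/
  image_open : IsOpen (Subtype.val ⁻¹' {τ : AutK k | ∃ γ ∈ b'.A, ∀ x : K k,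
      ((γ : (K k) ≃ₐ[k] (K k)) (σ x)) = σ ((τ : (K k) ≃ₐ[k] (K k)) x)} : Set b.A)

/-- A morphism of `𝒜` from `E/F` to `E'/F'`: a continuous embedding `ρ : E → E'`
inducing the identity on the residue field `k`, mapping `F` into `F'`, such that
`E'/ρ(E)` and `F'/ρ(F)` are finite separable extensions. -/
structure AMor {p : ℕ} (a a' : AObj p k) where
  /-- the underlying embedding `E → E'` -/
  ρ : a.E →+* a'.E
  /-- the restriction `F → F'` of `ρ` to the base fields -/
  ρF : a.F →+* a'.F
  square : ∀ x : a.F, ρ (algebraMap a.F a.E x) = algebraMap a'.F a'.E (ρF x)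
  /-- `ρ` is continuous -/
  cont : @Continuous _ _ (Valued.mk' a.valE).toUniformSpace.toTopologicalSpace
      (Valued.mk' a'.valE).toUniformSpace.toTopologicalSpace ρ
  /-- `E'` is finite over `ρ(E)` -/
  finE : ρ.Finite
  /-- `E'` is separable over `ρ(E)` -/
  sepE : @Algebra.IsSeparable a.E a'.E _ _ ρ.toAlgebra
  /-- `F'` is finite over `ρ(F)` -/
  finF : ρF.Finite
  /-- `F'` is separable over `ρ(F)` -/
  sepF : @Algebra.IsSeparable a.F a'.F _ _ ρF.toAlgebra
  /-- `ρ` induces the identity on the residue field `k` -/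
  resk : ∀ x : a.F, ∀ hx : a.base.val x ≤ 1, ∃ hx' : a'.base.val (ρF x) ≤ 1,
      a'.base.res (ρF x) hx' = a.base.res x hx

/-- `s` is the `ℬ`-morphism induced by the `𝒜`-morphism `ρ` under the field of norms
functor, i.e. `s = ℱ(ρ)`:  for all sufficiently large finite subextensions `L` of
`E/F` there is a finite subextension `L'` of `E'/F'` with `ρ(L) ⊆ L'` such that the
`L'`-component of `s(x)` is `ρ` applied to the `L`-component of `x`. -/
def Induces {p : ℕ} {a a' : AObj p k} (na : ANorm a) (na' : ANorm a')
    (ρ : AMor a a') (s : BMor (toBObj a na) (toBObj a' na')) : Prop :=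
  ∃ M₀ : IntermediateField a.F a.E, FiniteDimensional a.F M₀ ∧
    ∀ L : IntermediateField a.F a.E, FiniteDimensional a.F L → M₀ ≤ L →
      ∃ L' : IntermediateField a'.F a'.E, FiniteDimensional a'.F L' ∧
        (∀ z ∈ L, ρ.ρ z ∈ L') ∧
        ∀ x : K k, na'.comp (s.σ x) L' = ρ.ρ (na.comp x L)

/-- Ramification filtrations (in the lower and upper numbering) on the Galois group
of an object `E/F` of `𝒜`.  The filtration is pinned down by the `anchor` axiom:
via Herbrand's theorem, the image of `G[x]` in the Galois group of a finite
subextension `L/F` is the concretely defined ramification subgroup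
`Gal(L/F)[φ_{E/L}(x)] = {σ : v_L(σ(π_L) - π_L) ≥ φ_{E/L}(x) + 1}`, where
`φ_{E/L}(x) = ∫_0^x dt / [Gal(E/L)[0] : Gal(E/L)[t]]`.  The upper numbering is
obtained from the lower numbering via the Hasse–Herbrand function
`φ_{E/F}(x) = ∫_0^x dt / [G[0] : G[t]]`, i.e. `G(φ_{E/F}(x)) = G[x]`. -/
structure LowerRamData {p : ℕ} (a : AObj p k) where
  /-- the ramification subgroups `G[x]` in the lower numbering -/
  low : ℝ → Subgroup (a.E ≃ₐ[a.F] a.E)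
  /-- `G[0] = G` (the extension is totally ramified) -/
  low_zero : low 0 = ⊤
  /-- the filtration is decreasing -/
  mono : ∀ x y : ℝ, 0 ≤ x → x ≤ y → low y ≤ low x
  /-- each `G[x]` has finite index (the extension is arithmetically profinite) -/
  finiteIndex : ∀ x : ℝ, (low x).index ≠ 0
  /-- Herbrand compatibility with the concrete filtration at finite levels -/
  anchor : ∀ L : IntermediateField a.F a.E, FiniteDimensional a.F L →
      ∀ x : ℝ, 0 ≤ x → ∀ σ : a.E ≃ₐ[a.F] a.E,
      (σ ∈ low x ⊔ L.fixingSubgroup ↔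
        ∀ π : a.E, IsUnifOf a.valE L π →
          a.valE (σ π - π) ≤ (a.valE π) ^
            (⌈∫ t in (0:ℝ)..x,
                (((L.fixingSubgroup ⊓ low t).relIndex L.fixingSubgroup : ℝ))⁻¹⌉ + 1))
  /-- the ramification subgroups `G(u)` in the upper numbering -/
  upr : ℝ → Subgroup (a.E ≃ₐ[a.F] a.E)
  /-- `G(φ_{E/F}(x)) = G[x]` -/
  upr_low : ∀ x : ℝ, 0 ≤ x →
      upr (∫ t in (0:ℝ)..x, (((low t).index : ℝ))⁻¹) = low x

/-- The subgroup `A` of `Aut_k(K)` is topologically finitely generated. -/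
def TopFG (b : BObj k) : Prop :=
  ∃ S : Finset (AutK k),
    (b.A : Set (AutK k)) ⊆ _root_.closure ((Subgroup.closure (S : Set (AutK k)) : Subgroup (AutK k)) : Set (AutK k))


section ValuationUniqueness

open scoped NNReal
set_option maxHeartbeats 1000000
set_option synthInstance.maxHeartbeats 400000

lemma zToQ_coe (a : Multiplicative ℤ) :
    zToQ (a : Zm0) = ((Multiplicative.ofAdd ((a.toAdd : ℤ) : ℚ) : Multiplicative ℚ) : Qm0) := rfl

/-- The function underlying `qhom`. -/
def qfun (x : Qm0) : ℝ≥0 := if hx : x = 0 then 0 else (2 : ℝ≥0) ^ ((WithZero.unzero hx).toAdd : ℝ)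

lemma qfun_zero : qfun 0 = 0 := dif_pos rfl

lemma qfun_coe (a : Multiplicative ℚ) :
    qfun (a : Qm0) = (2 : ℝ≥0) ^ ((a.toAdd : ℚ) : ℝ) := by
  rw [qfun, dif_neg WithZero.coe_ne_zero, WithZero.unzero_coe]

/-- The order-embedding `Qm0 →*₀ ℝ≥0`. -/
def qhom : Qm0 →*₀ ℝ≥0 where
  toFun := qfun
  map_zero' := qfun_zero
  map_one' := by
    show qfun 1 = 1
    have : ((1 : Multiplicative ℚ) : Qm0) = 1 := rfl
    rw [← this, qfun_coe]
    norm_num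
  map_mul' := by
    intro x y
    show qfun (x * y) = qfun x * qfun y
    rcases eq_or_ne x 0 with rfl | hx
    · simp [qfun_zero]
    rcases eq_or_ne y 0 with rfl | hy
    · simp [qfun_zero]
    lift x to Multiplicative ℚ using hx with a
    lift y to Multiplicative ℚ using hy with b
    rw [← WithZero.coe_mul, qfun_coe, qfun_coe, qfun_coe, toAdd_mul]
    push_cast
    rw [NNReal.rpow_add two_ne_zero]

lemma qhom_coe (a : Multiplicative ℚ) :
    qhom (a : Qm0) = (2 : ℝ≥0) ^ ((a.toAdd : ℚ) : ℝ) := qfun_coe a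

lemma qhom_strictMono : StrictMono qhom := by
  intro x y h
  rcases eq_or_ne y 0 with rfl | hy
  · exact absurd h (not_lt_of_ge zero_le')
  lift y to Multiplicative ℚ using hy with b
  rcases eq_or_ne x 0 with rfl | hx
  · rw [map_zero, qhom_coe]
    exact NNReal.rpow_pos (by norm_num)
  lift x to Multiplicative ℚ using hx with a
  rw [qhom_coe, qhom_coe]
  refine NNReal.rpow_lt_rpow_of_exponent_lt one_lt_two ?_
  have := WithZero.coe_lt_coe.mp h
  exact_mod_cast Multiplicative.toAdd_lt.mpr this

lemma zToQ_strictMono : StrictMono zToQ := by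
  intro x y h
  rcases eq_or_ne y 0 with rfl | hy
  · exact absurd h (not_lt_of_ge zero_le')
  lift y to Multiplicative ℤ using hy with b
  rcases eq_or_ne x 0 with rfl | hx
  · rw [map_zero, zToQ_coe]
    exact WithZero.zero_lt_coe _
  lift x to Multiplicative ℤ using hx with a
  rw [zToQ_coe, zToQ_coe, WithZero.coe_lt_coe]
  rw [Multiplicative.ofAdd_lt]
  exact_mod_cast Multiplicative.toAdd_lt.mpr (WithZero.coe_lt_coe.mp h)

open Filter in
theorem val_lt_one_iff_forall_tendsto {F : Type} [NontriviallyNormedField F] [CompleteSpace F]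
    {L : Type} [Field L] [Algebra F L] [FiniteDimensional F L]
    (v : Valuation L Qm0) (hnt : ∃ y : L, v y ≠ 0 ∧ v y ≠ 1)
    (hcomp : ∀ c : F, (qhom (v (algebraMap F L c)) : ℝ) = ‖c‖) (x : L) :
    v x < 1 ↔ ∀ l : L →ₗ[F] F, Tendsto (fun n : ℕ => l (x ^ n)) atTop (nhds 0) := by
  letI : Valued L Qm0 := Valued.mk' v
  letI rk : Valuation.RankOne (Valued.v (R := L)) :=
    { hom' := qhom.comp MonoidWithZeroHom.ValueGroup₀.embedding,
      strictMono' := qhom_strictMono.comp MonoidWithZeroHom.ValueGroup₀.embedding_strictMono,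
      exists_val_nontrivial := hnt }
  letI : NormedField L := Valued.toNormedField L Qm0
  have hnorm : ∀ z : L, ‖z‖ = (qhom (v z) : ℝ) := fun z => by
    show ((qhom (MonoidWithZeroHom.ValueGroup₀.embedding (v.restrict z)) : ℝ≥0) : ℝ) = _
    rw [Valuation.embedding_restrict]
  letI : NormedSpace F L :=
    { toModule := Algebra.toModule, norm_smul_le := fun c y => by
        rw [Algebra.smul_def, norm_mul]
        apply mul_le_mul_of_nonneg_right _ (norm_nonneg y)
        rw [hnorm, hcomp] }
  haveI : ContinuousSMul F L := IsBoundedSMul.continuousSMul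
  constructor
  · intro hx l
    have hx' : ‖x‖ < 1 := by
      rw [Valued.toNormedField.norm_lt_one_iff]; exact hx
    have h0 : Tendsto (fun n : ℕ => x ^ n) atTop (nhds 0) :=
      tendsto_pow_atTop_nhds_zero_of_norm_lt_one hx'
    have hl : Continuous l := l.continuous_of_finiteDimensional
    have := (hl.tendsto 0).comp h0
    simpa [Function.comp_def] using this
  · intro h
    classical
    have B := Module.finBasis F L
    have hx0 : Tendsto (fun n : ℕ => x ^ n) atTop (nhds 0) := by
      have hrepr : ∀ n : ℕ, x ^ n = ∑ i, (B.repr (x ^ n)) i • B i := fun n =>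
        (B.sum_repr _).symm
      rw [funext hrepr]
      have hlim : Tendsto (fun n : ℕ => ∑ i, (B.repr (x ^ n)) i • B i) atTop
          (nhds (∑ i, (0 : F) • B i)) := by
        apply tendsto_finset_sum
        intro i _
        exact (h (B.coord i)).smul_const _
      simpa using hlim
    by_contra hge
    push_neg at hge
    have h1 : (1 : ℝ) ≤ ‖x‖ := by
      rw [Valued.toNormedField.one_le_norm_iff]; exact hge
    have hn : Tendsto (fun n : ℕ => ‖x ^ n‖) atTop (nhds 0) := by
      simpa [Function.comp_def] using ((continuous_norm.tendsto (0 : L)).comp hx0)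
    obtain ⟨n, hn'⟩ := (hn.eventually_lt_const (by norm_num : (0 : ℝ) < 1)).exists
    rw [norm_pow] at hn'
    exact absurd hn' (not_lt_of_ge (one_le_pow₀ h1))

theorem valuation_unique {F : Type} [Field F]
    (val : Valuation F Zm0) (hd : Function.Surjective val)
    (hc : @CompleteSpace F (Valued.mk' val).toUniformSpace)
    {L : Type} [Field L] [Algebra F L] [FiniteDimensional F L]
    (v₁ v₂ : Valuation L Qm0)
    (h₁ : ∀ c : F, v₁ (algebraMap F L c) = zToQ (val c))
    (h₂ : ∀ c : F, v₂ (algebraMap F L c) = zToQ (val c)) : v₁ = v₂ := by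
  letI : Valued F Zm0 := Valued.mk' val
  letI rk : Valuation.RankOne (Valued.v (R := F)) :=
    { hom' := (qhom.comp zToQ).comp MonoidWithZeroHom.ValueGroup₀.embedding
      strictMono' := (qhom_strictMono.comp zToQ_strictMono).comp
        MonoidWithZeroHom.ValueGroup₀.embedding_strictMono
      exists_val_nontrivial := by
        obtain ⟨ϖ, hϖ⟩ := hd ((Multiplicative.ofAdd (-1 : ℤ) : Multiplicative ℤ) : Zm0)
        refine ⟨ϖ, ?_, ?_⟩
        · show val ϖ ≠ 0
          rw [hϖ]; exact WithZero.coe_ne_zero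
        · show val ϖ ≠ 1
          rw [hϖ, ← WithZero.coe_one, Ne, WithZero.coe_inj]
          intro hcon
          have := congrArg Multiplicative.toAdd hcon
          simpa using this }
  letI : NontriviallyNormedField F := Valued.toNontriviallyNormedField F Zm0
  haveI : CompleteSpace F := hc
  have hwnorm : ∀ c : F, ‖c‖ = (qhom (zToQ (val c)) : ℝ) := fun c => by
    show ((((qhom.comp zToQ).comp MonoidWithZeroHom.ValueGroup₀.embedding) (val.restrict c) : ℝ≥0) : ℝ) = _
    simp only [MonoidWithZeroHom.comp_apply, Valuation.embedding_restrict]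
  have hnt : ∀ (v : Valuation L Qm0), (∀ c : F, v (algebraMap F L c) = zToQ (val c)) →
      ∃ y : L, v y ≠ 0 ∧ v y ≠ 1 := by
    intro v hv
    obtain ⟨ϖ, hϖ⟩ := hd ((Multiplicative.ofAdd (-1 : ℤ) : Multiplicative ℤ) : Zm0)
    refine ⟨algebraMap F L ϖ, ?_, ?_⟩
    · rw [hv, hϖ, zToQ_coe]; exact WithZero.coe_ne_zero
    · rw [hv, hϖ, zToQ_coe, ← WithZero.coe_one, Ne, WithZero.coe_inj]
      intro hcon
      have := congrArg Multiplicative.toAdd hcon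
      simpa using this
  have hcomp : ∀ (v : Valuation L Qm0), (∀ c : F, v (algebraMap F L c) = zToQ (val c)) →
      ∀ c : F, (qhom (v (algebraMap F L c)) : ℝ) = ‖c‖ := by
    intro v hv c
    rw [hv, hwnorm]
  have hlt : ∀ z : L, v₁ z < 1 ↔ v₂ z < 1 := by
    intro z
    rw [val_lt_one_iff_forall_tendsto v₁ (hnt v₁ h₁) (hcomp v₁ h₁) z,
      val_lt_one_iff_forall_tendsto v₂ (hnt v₂ h₂) (hcomp v₂ h₂) z]
  -- now derive equality
  ext x
  rcases eq_or_ne x 0 with rfl | hx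
  · simp
  have h10 : v₁ x ≠ 0 := v₁.ne_zero_iff.mpr hx
  have h20 : v₂ x ≠ 0 := v₂.ne_zero_iff.mpr hx
  set qa : ℚ := (WithZero.unzero h10).toAdd with hqa
  set qb : ℚ := (WithZero.unzero h20).toAdd with hqb
  have ha : v₁ x = ((Multiplicative.ofAdd qa : Multiplicative ℚ) : Qm0) := by
    rw [hqa, ofAdd_toAdd, WithZero.coe_unzero]
  have hb : v₂ x = ((Multiplicative.ofAdd qb : Multiplicative ℚ) : Qm0) := by
    rw [hqb, ofAdd_toAdd, WithZero.coe_unzero]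
  have hvpow : ∀ (v : Valuation L Qm0), (∀ c : F, v (algebraMap F L c) = zToQ (val c)) →
      ∀ (q : ℚ), v x = ((Multiplicative.ofAdd q : Multiplicative ℚ) : Qm0) →
      ∀ (m : ℕ) (p : ℤ) (c : F), val c = ((Multiplicative.ofAdd (-p) : Multiplicative ℤ) : Zm0) →
      (v (x ^ m * algebraMap F L c) < 1 ↔ (m : ℚ) * q < (p : ℚ)) := by
    intro v hv q hq m p c hcval
    rw [Valuation.map_mul, Valuation.map_pow, hq, hv, hcval, zToQ_coe, toAdd_ofAdd,
      ← WithZero.coe_pow, ← WithZero.coe_mul, ← WithZero.coe_one, WithZero.coe_lt_coe,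
      ← ofAdd_nsmul, ← ofAdd_add, ← ofAdd_zero, Multiplicative.ofAdd_lt, nsmul_eq_mul]
    push_cast
    constructor <;> intro h <;> linarith
  have key : ∀ (m : ℕ) (p : ℤ), ((m : ℚ) * qa < p ↔ (m : ℚ) * qb < p) := by
    intro m p
    obtain ⟨c, hcval⟩ := hd ((Multiplicative.ofAdd (-p) : Multiplicative ℤ) : Zm0)
    rw [← hvpow v₁ h₁ qa ha m p c hcval, ← hvpow v₂ h₂ qb hb m p c hcval]
    exact hlt _
  have hqaqb : qa = qb := by
    by_contra hne
    rcases lt_or_gt_of_ne hne with hlt' | hlt'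
    · set q : ℚ := (qa + qb) / 2 with hq
      have h1 : qa < q := by rw [hq]; linarith
      have h2 : q < qb := by rw [hq]; linarith
      have hden : (0 : ℚ) < (q.den : ℚ) := by exact_mod_cast q.pos
      have hnum : (q.den : ℚ) * q = (q.num : ℚ) := by
        rw [mul_comm]
        exact Rat.mul_den_eq_num q
      have hA : (q.den : ℚ) * qa < (q.num : ℚ) := by
        rw [← hnum]; exact (mul_lt_mul_iff_right₀ hden).mpr h1
      have hB := (key q.den q.num).mp hA
      have : (q.num : ℚ) < (q.den : ℚ) * qb := by
        rw [← hnum]; exact (mul_lt_mul_iff_right₀ hden).mpr h2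
      linarith
    · set q : ℚ := (qa + qb) / 2 with hq
      have h1 : qb < q := by rw [hq]; linarith
      have h2 : q < qa := by rw [hq]; linarith
      have hden : (0 : ℚ) < (q.den : ℚ) := by exact_mod_cast q.pos
      have hnum : (q.den : ℚ) * q = (q.num : ℚ) := by
        rw [mul_comm]
        exact Rat.mul_den_eq_num q
      have hA : (q.den : ℚ) * qb < (q.num : ℚ) := by
        rw [← hnum]; exact (mul_lt_mul_iff_right₀ hden).mpr h1
      have hB := (key q.den q.num).mpr hA
      have : (q.num : ℚ) < (q.den : ℚ) * qa := by
        rw [← hnum]; exact (mul_lt_mul_iff_right₀ hden).mpr h2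
      linarith
  rw [ha, hb, hqaqb]

end ValuationUniqueness

open Polynomial IntermediateField

set_option maxHeartbeats 1000000
set_option synthInstance.maxHeartbeats 400000

/-- Let `F` be a complete discretely valued field, `g ∈ O_F[T]` a separable monic
Eisenstein polynomial with roots `α_1, …, α_n` in the algebraic closure, `α` one of
the roots (generating `E = F(α)`) and `d = v_E(g'(α))`.  Then for any `π`,
`v_E(g(π)) ≤ w + d`, where `w = max_i v_E(π - α_i)`.

Here the valuation `w` is the unique extension of the valuation of `F` to the
algebraic closure; additively the claim says that the root `β` closest to `π`
(i.e. maximizing `v_E(π - β)`, equivalently minimizing `w(π - β)`) satisfies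
`v_E(g(π)) ≤ v_E(π - β) + d`, expressed multiplicatively as
`w(π - β) · w(g'(α)) ≤ w(g(π))`. -/
theorem statement_13
    (F : Type) [Field F] (S : CDVF F)
    (w : Valuation (AlgebraicClosure F) Qm0)
    (hw : ∀ x : F, w (algebraMap F (AlgebraicClosure F) x) = zToQ (S.val x))
    (g : Polynomial S.val.valuationSubring) (hmon : g.Monic)
    (heis : g.IsEisensteinAt (IsLocalRing.maximalIdeal S.val.valuationSubring))
    (hsep : (g.map (algebraMap S.val.valuationSubring F)).Separable)
    (α : AlgebraicClosure F)
    (hα : Polynomial.aeval α (g.map (algebraMap S.val.valuationSubring F)) = 0)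
    (π : AlgebraicClosure F) :
    ∃ β : AlgebraicClosure F,
      Polynomial.aeval β (g.map (algebraMap S.val.valuationSubring F)) = 0 ∧
      (∀ β' : AlgebraicClosure F,
        Polynomial.aeval β' (g.map (algebraMap S.val.valuationSubring F)) = 0 →
        w (π - β) ≤ w (π - β')) ∧
      w (π - β) * w (Polynomial.aeval α
          (Polynomial.derivative (g.map (algebraMap S.val.valuationSubring F))))
        ≤ w (Polynomial.aeval π (g.map (algebraMap S.val.valuationSubring F))) := by
  classical
  set G : Polynomial F := g.map (algebraMap S.val.valuationSubring F) with hGdef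
  have hGmon : G.Monic := hmon.map _
  have hG0 : G ≠ 0 := hGmon.ne_zero
  set Gc : Polynomial (AlgebraicClosure F) := G.map (algebraMap F (AlgebraicClosure F)) with hGcdef
  have hGcmon : Gc.Monic := hGmon.map _
  have hGc0 : Gc ≠ 0 := hGcmon.ne_zero
  have hmemroots : ∀ b : (AlgebraicClosure F), Polynomial.aeval b G = 0 ↔ b ∈ G.aroots (AlgebraicClosure F) := fun b =>
    (Polynomial.mem_aroots.trans (and_iff_right hG0)).symm
  have hαR : α ∈ G.aroots (AlgebraicClosure F) := (hmemroots α).mp hα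
  -- minimizer
  obtain ⟨β, hβT, hβmin⟩ := Finset.exists_min_image (G.aroots (AlgebraicClosure F)).toFinset
    (fun r => w (π - r)) ⟨α, Multiset.mem_toFinset.mpr hαR⟩
  have hβR : β ∈ G.aroots (AlgebraicClosure F) := Multiset.mem_toFinset.mp hβT
  have hβ : Polynomial.aeval β G = 0 := (hmemroots β).mpr hβR
  refine ⟨β, hβ, fun β' hβ' => hβmin β' (Multiset.mem_toFinset.mpr ((hmemroots β').mp hβ')), ?_⟩
  -- irreducibility of G
  have hdeg : 0 < g.natDegree := by
    by_contra hcon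
    push_neg at hcon
    have h0 : g = 1 := hmon.natDegree_eq_zero.mp (Nat.le_zero.mp hcon)
    rw [hGdef, h0] at hα
    simp at hα
  haveI hIC : IsIntegrallyClosed S.val.valuationSubring :=
    inferInstance
  have hgirr : Irreducible g :=
    heis.irreducible (Ideal.IsMaximal.isPrime' _) hmon.isPrimitive hdeg
  have hGirr : Irreducible G :=
    (hmon.irreducible_iff_irreducible_map_fraction_map).mp hgirr
  have hminpoly : minpoly F β = G :=
    (minpoly.eq_of_irreducible_of_monic hGirr hβ hGmon).symm
  have hβint : IsIntegral F β := ⟨G, hGmon, by rw [← Polynomial.aeval_def]; exact hβ⟩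
  haveI : FiniteDimensional F F⟮β⟯ := IntermediateField.adjoin.finiteDimensional hβint
  -- the F-algebra embedding of F⟮β⟯ into (AlgebraicClosure F) sending β to α
  have hαm : α ∈ (minpoly F β).aroots (AlgebraicClosure F) := by rw [hminpoly]; exact hαR
  set φ : F⟮β⟯ →ₐ[F] (AlgebraicClosure F) := (IntermediateField.algHomAdjoinIntegralEquiv F hβint).symm ⟨α, hαm⟩
    with hφdef
  have hφgen : φ (IntermediateField.AdjoinSimple.gen F β) = α :=
    IntermediateField.algHomAdjoinIntegralEquiv_symm_apply_gen F hβint _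
  -- two valuations on F⟮β⟯
  set v₁ : Valuation F⟮β⟯ Qm0 := w.comap (algebraMap F⟮β⟯ (AlgebraicClosure F)) with hv₁def
  set v₂ : Valuation F⟮β⟯ Qm0 := w.comap φ.toRingHom with hv₂def
  have h₁ : ∀ c : F, v₁ (algebraMap F F⟮β⟯ c) = zToQ (S.val c) := fun c => by
    show w (algebraMap F⟮β⟯ (AlgebraicClosure F) (algebraMap F F⟮β⟯ c)) = _
    rw [← IsScalarTower.algebraMap_apply, hw]
  have h₂ : ∀ c : F, v₂ (algebraMap F F⟮β⟯ c) = zToQ (S.val c) := fun c => by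
    show w (φ (algebraMap F F⟮β⟯ c)) = _
    rw [φ.commutes, hw]
  have hv12 : v₁ = v₂ := valuation_unique S.val S.isDiscrete S.complete v₁ v₂ h₁ h₂
  -- transfer of the derivative value
  set y : F⟮β⟯ := Polynomial.aeval (IntermediateField.AdjoinSimple.gen F β)
    (Polynomial.derivative G) with hydef
  have hy1 : algebraMap F⟮β⟯ (AlgebraicClosure F) y = Polynomial.aeval β (Polynomial.derivative G) := by
    rw [hydef, ← Polynomial.aeval_algebraMap_apply, IntermediateField.AdjoinSimple.algebraMap_gen]
  have hy2 : φ y = Polynomial.aeval α (Polynomial.derivative G) := by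
    rw [hydef, ← Polynomial.aeval_algHom_apply, hφgen]
  have hswap : w (Polynomial.aeval α (Polynomial.derivative G))
      = w (Polynomial.aeval β (Polynomial.derivative G)) := by
    rw [← hy1, ← hy2]
    show v₂ y = v₁ y
    rw [hv12]
  rw [hswap]
  -- expand both sides as products over roots
  have hder : Polynomial.aeval β (Polynomial.derivative G)
      = (((G.aroots (AlgebraicClosure F)).erase β).map fun a => β - a).prod :=
    by
      rw [Polynomial.aeval_def, ← Polynomial.eval_map, ← Polynomial.derivative_map]
      exact (IsAlgClosed.splits _).eval_root_derivative (hGmon.map _) hβR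
  have heval : Polynomial.aeval π G = ((G.aroots (AlgebraicClosure F)).map fun a => π - a).prod := by
    have hfact : Gc = (Gc.roots.map fun a => Polynomial.X - Polynomial.C a).prod :=
      (IsAlgClosed.splits Gc).eq_prod_roots_of_monic hGcmon
    have : Polynomial.aeval π G = Gc.eval π := by
      rw [hGcdef, Polynomial.eval_map, Polynomial.aeval_def]
    rw [this]
    conv_lhs => rw [hfact]
    rw [Polynomial.eval_multiset_prod, Multiset.map_map]
    apply congrArg
    apply Multiset.map_congr rfl
    intro a _
    simp
  rw [hder, heval, map_multiset_prod, map_multiset_prod, Multiset.map_map, Multiset.map_map]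
  have hcons : β ::ₘ (G.aroots (AlgebraicClosure F)).erase β = G.aroots (AlgebraicClosure F) := Multiset.cons_erase hβR
  conv_rhs => rw [← hcons, Multiset.map_cons, Multiset.prod_cons]
  show w (π - β) * _ ≤ w (π - β) * _
  apply mul_le_mul_right
  apply Multiset.prod_map_le_prod_map₀
  · intro i _
    exact zero_le'
  · intro r hr
    have hrR : r ∈ G.aroots (AlgebraicClosure F) := Multiset.mem_of_mem_erase hr
    have hm : w (π - β) ≤ w (π - r) := hβmin r (Multiset.mem_toFinset.mpr hrR)
    have hsplit : β - r = (β - π) + (π - r) := by ring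
    calc w (β - r) ≤ max (w (β - π)) (w (π - r)) := by rw [hsplit]; exact w.map_add _ _
      _ ≤ w (π - r) := max_le (by rwa [w.map_sub_swap]) le_rfl


end FieldOfNormsPaper
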